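/- Let G be a locally compact, second countable group, let Γ be a lattice in G, and let c ≥ 1. If Γ has Property (T)_c, then G has Property (T)_c. -/

import Mathlib

open scoped ENNReal
open MeasureTheory

structure HilbRep (G : Type*) [Group G] [TopologicalSpace G] where
  (space : Type*)
  [normedAddCommGroup : NormedAddCommGroup space]
  [innerProductSpace : InnerProductSpace ℂ space]
  [completeSpace : CompleteSpace space]
  toFun : G →* (space →L[ℂ] space)ˣ

attribute [instance] HilbRep.normedAddCommGroup HilbRep.innerProductSpace HilbRep.completeSpace

namespace HilbRep

variable {G : Type*} [Group G] [TopologicalSpace G]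

/-- The bounded invertible operator associated to a group element. -/
def op (π : HilbRep G) (s : G) : π.space →L[ℂ] π.space :=
  (π.toFun s : π.space →L[ℂ] π.space)

/-- The representation is uniformly bounded by `c`. -/
def IsUB (π : HilbRep G) (c : ℝ) : Prop := ∀ s : G, ‖π.op s‖ ≤ c

/-- The representation is continuous for the strong operator topology. -/
def IsSOTContinuous (π : HilbRep G) : Prop :=
  ∀ ξ : π.space, Continuous fun s : G => π.op s ξ

/-- `π ∈ R_c(G)`: strongly continuous and uniformly bounded by `c`. -/
def IsRc (π : HilbRep G) (c : ℝ) : Prop := π.IsUB c ∧ π.IsSOTContinuous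

/-- `π` almost has invariant vectors. -/
def AlmostInvariantVectors (π : HilbRep G) : Prop :=
  ∀ Q : Set G, IsCompact Q → ∀ ε : ℝ, 0 < ε →
    ∃ ξ : π.space, ∀ s ∈ Q, ‖π.op s ξ - ξ‖ < ε * ‖ξ‖

/-- `π` has a nonzero invariant vector. -/
def HasInvariantVector (π : HilbRep G) : Prop :=
  ∃ ξ : π.space, ξ ≠ 0 ∧ ∀ s : G, π.op s ξ = ξ

end HilbRep

namespace HilbRep

variable {G : Type*} [Group G] [TopologicalSpace G]

lemma op_mul_apply (π : HilbRep G) (a b : G) (x : π.space) :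
    π.op (a * b) x = π.op a (π.op b x) := by
  simp [HilbRep.op, map_mul]

lemma op_one_apply (π : HilbRep G) (x : π.space) : π.op 1 x = x := by
  simp [HilbRep.op]

end HilbRep

section Aux

variable {G : Type*} [Group G] [TopologicalSpace G] (π : HilbRep G) (Γ : Subgroup G)

/-- The submodule of `Γ`-fixed vectors. -/
def fixedK : Submodule ℂ π.space where
  carrier := {ξ | ∀ γ : Γ, π.op (↑γ) ξ = ξ}
  add_mem' := fun {a b} ha hb γ => by rw [map_add, ha γ, hb γ]
  zero_mem' := fun γ => map_zero _
  smul_mem' := fun r x hx γ => by rw [_root_.map_smul, hx γ]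

lemma mem_fixedK {ξ : π.space} : ξ ∈ fixedK π Γ ↔ ∀ γ : Γ, π.op (↑γ) ξ = ξ := Iff.rfl

lemma isClosed_fixedK : IsClosed ((fixedK π Γ : Submodule ℂ π.space) : Set π.space) := by
  have : ((fixedK π Γ : Submodule ℂ π.space) : Set π.space)
      = ⋂ γ : Γ, {ξ | π.op (↑γ) ξ = ξ} := by
    ext x; simp [mem_fixedK, Set.mem_iInter]
  rw [this]
  exact isClosed_iInter fun γ => isClosed_eq (π.op (↑γ)).continuous continuous_id

instance : CompleteSpace (fixedK π Γ) := (isClosed_fixedK π Γ).completeSpace_coe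

/-- The operator induced on the orthogonal complement of the fixed vectors. -/
noncomputable def opA (γ : Γ) : ((fixedK π Γ)ᗮ : Submodule ℂ π.space) →L[ℂ] (fixedK π Γ)ᗮ :=
  (Submodule.orthogonalProjectionOnto (fixedK π Γ)ᗮ).comp ((π.op (↑γ)).comp (fixedK π Γ)ᗮ.subtypeL)

lemma opA_apply (γ : Γ) (ζ : (fixedK π Γ)ᗮ) :
    opA π Γ γ ζ = Submodule.orthogonalProjectionOnto (fixedK π Γ)ᗮ (π.op (↑γ) (ζ : π.space)) := rfl

lemma proj_op (γ : Γ) (x : π.space) :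
    Submodule.orthogonalProjectionOnto (fixedK π Γ)ᗮ (π.op (↑γ) x)
      = opA π Γ γ (Submodule.orthogonalProjectionOnto (fixedK π Γ)ᗮ x) := by
  set K := fixedK π Γ
  have hx : (Submodule.orthogonalProjectionOnto K x : π.space) + (Submodule.orthogonalProjectionOnto Kᗮ x : π.space) = x :=
    Submodule.starProjection_add_starProjection_orthogonal (K := K) x
  rw [opA_apply]
  conv_lhs => rw [← hx]
  rw [map_add, map_add]
  have h1 : π.op (↑γ) ((Submodule.orthogonalProjectionOnto K x : π.space)) = (Submodule.orthogonalProjectionOnto K x : π.space) :=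
    (Submodule.orthogonalProjectionOnto K x).2 γ
  rw [h1, Submodule.orthogonalProjectionOnto_apply_of_mem_orthogonal
    (K.le_orthogonal_orthogonal (Submodule.orthogonalProjectionOnto K x).2), zero_add]

lemma opA_mul (γ γ' : Γ) (ζ : (fixedK π Γ)ᗮ) :
    opA π Γ (γ * γ') ζ = opA π Γ γ (opA π Γ γ' ζ) := by
  rw [opA_apply π Γ γ' ζ, ← proj_op, opA_apply, Subgroup.coe_mul, HilbRep.op_mul_apply]

lemma opA_one (ζ : (fixedK π Γ)ᗮ) : opA π Γ 1 ζ = ζ := by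
  rw [opA_apply]
  rw [show ((1 : Γ) : G) = (1 : G) from rfl, HilbRep.op_one_apply]
  exact Submodule.orthogonalProjectionOnto_mem_subspace_eq_self ζ

end Aux

section Sigma

variable {G : Type*} [Group G] [TopologicalSpace G] (π : HilbRep G) (Γ : Subgroup G)

/-- The representation of `Γ` induced on the orthogonal complement of the fixed vectors. -/
noncomputable def sigmaRep : HilbRep Γ where
  space := ((fixedK π Γ)ᗮ : Submodule ℂ π.space)
  toFun :=
  { toFun := fun γ =>
      { val := opA π Γ γ
        inv := opA π Γ γ⁻¹
        val_inv := ContinuousLinearMap.ext fun ζ => by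
          rw [ContinuousLinearMap.mul_apply, ← opA_mul, mul_inv_cancel, opA_one,
            ContinuousLinearMap.one_apply]
        inv_val := ContinuousLinearMap.ext fun ζ => by
          rw [ContinuousLinearMap.mul_apply, ← opA_mul, inv_mul_cancel, opA_one,
            ContinuousLinearMap.one_apply] }
    map_one' := Units.ext (ContinuousLinearMap.ext fun ζ => by
      simpa using opA_one π Γ ζ)
    map_mul' := fun γ γ' => Units.ext (ContinuousLinearMap.ext fun ζ => by
      simpa using opA_mul π Γ γ γ' ζ) }

lemma sigmaRep_op (γ : Γ) : (sigmaRep π Γ).op γ = opA π Γ γ := rfl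

lemma sigmaRep_isUB {c : ℝ} (hc : 1 ≤ c) (hub : π.IsUB c) : (sigmaRep π Γ).IsUB c := by
  intro γ
  rw [sigmaRep_op]
  refine ContinuousLinearMap.opNorm_le_bound _ (zero_le_one.trans hc) fun ζ => ?_
  have h1 : ‖opA π Γ γ ζ‖ ≤ ‖π.op (↑γ) (ζ : π.space)‖ := by
    rw [opA_apply]
    exact le_trans ((Submodule.orthogonalProjectionOnto ((fixedK π Γ)ᗮ)).le_opNorm _)
      (mul_le_of_le_one_left (norm_nonneg _) (Submodule.orthogonalProjectionOnto_norm_le ((fixedK π Γ)ᗮ)))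
  have h2 : ‖π.op (↑γ) (ζ : π.space)‖ ≤ c * ‖(ζ : π.space)‖ :=
    le_trans ((π.op _).le_opNorm _) (mul_le_mul_of_nonneg_right (hub _) (norm_nonneg _))
  exact le_trans h1 h2

lemma sigmaRep_sot [DiscreteTopology Γ] : (sigmaRep π Γ).IsSOTContinuous :=
  fun _ => continuous_of_discreteTopology

lemma sigmaRep_no_inv {c : ℝ} (hc : 1 ≤ c) (hub : π.IsUB c) :
    ¬ (sigmaRep π Γ).HasInvariantVector := by
  rintro ⟨ζ, hζ0, hfix⟩
  change ((fixedK π Γ)ᗮ : Submodule ℂ π.space) at ζ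
  have hfix' : ∀ γ : Γ, opA π Γ γ ζ = ζ := hfix
  set d : Γ → π.space := fun γ => π.op (↑γ) (ζ : π.space) - (ζ : π.space) with hd
  have hPOζ : Submodule.orthogonalProjectionOnto (fixedK π Γ)ᗮ (ζ : π.space) = ζ :=
    Submodule.orthogonalProjectionOnto_mem_subspace_eq_self ζ
  have hdapp : ∀ γ : Γ, d γ = π.op (↑γ) (ζ : π.space) - (ζ : π.space) := fun γ => rfl
  have hdK : ∀ γ : Γ, d γ ∈ fixedK π Γ := by
    intro γ
    have hdec : (Submodule.orthogonalProjectionOnto (fixedK π Γ) (π.op (↑γ) (ζ : π.space)) : π.space)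
        + (Submodule.orthogonalProjectionOnto (fixedK π Γ)ᗮ (π.op (↑γ) (ζ : π.space)) : π.space)
        = π.op (↑γ) (ζ : π.space) :=
      Submodule.starProjection_add_starProjection_orthogonal (K := fixedK π Γ) (π.op (↑γ) (ζ : π.space))
    have hPO : Submodule.orthogonalProjectionOnto (fixedK π Γ)ᗮ (π.op (↑γ) (ζ : π.space)) = ζ := by
      rw [proj_op, hPOζ]; exact hfix' γ
    rw [hPO] at hdec
    have heq : d γ = ↑(Submodule.orthogonalProjectionOnto (fixedK π Γ) (π.op (↑γ) (ζ : π.space))) := by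
      rw [hdapp]
      conv_lhs => rw [← hdec]
      abel
    rw [heq]; exact (Submodule.orthogonalProjectionOnto (fixedK π Γ) _).2
  have hcoc : ∀ γ γ' : Γ, d (γ * γ') = d γ + d γ' := by
    intro γ γ'
    have h1 : π.op (↑(γ * γ')) (ζ : π.space) = π.op (↑γ) (π.op (↑γ') (ζ : π.space)) := by
      rw [Subgroup.coe_mul, HilbRep.op_mul_apply]
    have h2 : π.op (↑γ') (ζ : π.space) = d γ' + (ζ : π.space) := by rw [hdapp]; abel
    have h3 : π.op (↑γ) (d γ') = d γ' := hdK γ' γ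
    rw [hdapp, hdapp, hdapp, h1, h2, map_add, h3]
    abel
  have hpow : ∀ (γ : Γ) (n : ℕ), d (γ ^ (n + 1)) = (n + 1 : ℕ) • d γ := by
    intro γ n
    induction n with
    | zero => simp
    | succ m ih => rw [pow_succ, hcoc, ih]; exact (succ_nsmul _ _).symm
  have hbound : ∀ γ : Γ, d γ = 0 := by
    intro γ
    by_contra hne
    have hnorm : ∀ n : ℕ, ((n : ℝ) + 1) * ‖d γ‖ ≤ (c + 1) * ‖(ζ : π.space)‖ := by
      intro n
      have h1 : ‖d (γ ^ (n + 1))‖ = ((n : ℝ) + 1) * ‖d γ‖ := by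
        rw [hpow, ← Nat.cast_smul_eq_nsmul ℝ, norm_smul, Real.norm_eq_abs,
          abs_of_nonneg (by positivity)]
        push_cast; ring
      have h2 : ‖d (γ ^ (n + 1))‖ ≤ (c + 1) * ‖(ζ : π.space)‖ := by
        rw [hdapp]
        have hA : ‖π.op (↑(γ ^ (n + 1))) (ζ : π.space)‖ ≤ c * ‖(ζ : π.space)‖ :=
          le_trans ((π.op _).le_opNorm _) (mul_le_mul_of_nonneg_right (hub _) (norm_nonneg _))
        calc ‖π.op (↑(γ ^ (n + 1))) (ζ : π.space) - (ζ : π.space)‖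
            ≤ ‖π.op (↑(γ ^ (n + 1))) (ζ : π.space)‖ + ‖(ζ : π.space)‖ := norm_sub_le _ _
          _ ≤ c * ‖(ζ : π.space)‖ + ‖(ζ : π.space)‖ := by linarith
          _ = (c + 1) * ‖(ζ : π.space)‖ := by ring
      linarith [h1 ▸ h2]
    obtain ⟨n, hn⟩ := exists_nat_gt ((c + 1) * ‖(ζ : π.space)‖ / ‖d γ‖)
    have hdpos : 0 < ‖d γ‖ := norm_pos_iff.2 hne
    have hN := hnorm n
    rw [div_lt_iff₀ hdpos] at hn
    nlinarith
  have hζK : (ζ : π.space) ∈ fixedK π Γ := by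
    intro γ
    have h := hbound γ
    rw [hdapp] at h
    exact sub_eq_zero.1 h
  have hz : (ζ : π.space) = 0 :=
    (Submodule.orthogonal_disjoint (fixedK π Γ)).le_bot ⟨hζK, ζ.2⟩
  exact hζ0 (Subtype.ext hz)

end Sigma

section Lift

variable {G : Type*} [Group G] [TopologicalSpace G] [IsTopologicalGroup G]
  [LocallyCompactSpace G] (Γ : Subgroup G)

lemma exists_compact_lift {C : Set (G ⧸ Γ)} (hC : IsCompact C) :
    ∃ Q : Set G, IsCompact Q ∧ C ⊆ QuotientGroup.mk '' Q := by
  -- choose a compact neighborhood of a representative for each point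
  have hnb : ∀ x : G ⧸ Γ, ∃ V : Set G, IsCompact V ∧ V ∈ nhds (Quotient.out x) :=
    fun x => exists_compact_mem_nhds _
  choose V hVc hVm using hnb
  have hcover : C ⊆ ⋃ x : G ⧸ Γ, QuotientGroup.mk '' interior (V x) := by
    intro x hx
    refine Set.mem_iUnion.2 ⟨x, ⟨Quotient.out x, mem_interior_iff_mem_nhds.2 (hVm x), ?_⟩⟩
    exact QuotientGroup.out_eq' x
  have hopen : ∀ x : G ⧸ Γ, IsOpen (QuotientGroup.mk '' interior (V x) : Set (G ⧸ Γ)) :=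
    fun x => QuotientGroup.isOpenMap_coe _ isOpen_interior
  obtain ⟨t, ht⟩ := hC.elim_finite_subcover _ hopen hcover
  refine ⟨⋃ x ∈ t, V x, t.isCompact_biUnion (fun x _ => hVc x), ?_⟩
  intro y hy
  obtain ⟨x, hxt, hyx⟩ := Set.mem_iUnion₂.1 (ht hy)
  obtain ⟨g, hg, hgy⟩ := hyx
  exact ⟨g, Set.mem_biUnion hxt (interior_subset hg), hgy⟩

end Lift

universe u v

/-- Property (T)_c. -/
def HasPropertyT (G : Type u) [Group G] [TopologicalSpace G] (c : ℝ) : Prop :=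
  ∀ π : HilbRep.{u, v} G, π.IsRc c → π.AlmostInvariantVectors → π.HasInvariantVector

/-- `Γ` is a lattice in `G`: a closed discrete subgroup such that `G / Γ` carries a
`G`-invariant regular Borel probability measure. -/
def IsLattice {G : Type u} [Group G] [TopologicalSpace G] [MeasurableSpace G]
    (Γ : Subgroup G) : Prop :=
  IsClosed (Γ : Set G) ∧ DiscreteTopology Γ ∧
    ∃ μ : Measure (G ⧸ Γ), IsProbabilityMeasure μ ∧ μ.Regular ∧
      ∀ g : G, Measure.map (fun x : G ⧸ Γ => g • x) μ = μ

set_option maxHeartbeats 1000000 in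
theorem propertyT_of_lattice_propertyT {G : Type u} [Group G] [TopologicalSpace G]
    [IsTopologicalGroup G] [LocallyCompactSpace G] [SecondCountableTopology G]
    [MeasurableSpace G] [BorelSpace G] (Γ : Subgroup G) (hΓ : IsLattice Γ)
    (c : ℝ) (hc : 1 ≤ c) (hT : HasPropertyT.{u, v} ↥Γ c) :
    HasPropertyT.{u, v} G c := by
  intro π hRc hAI
  obtain ⟨hub, hsot⟩ := hRc
  obtain ⟨hclosed, hdisc, μ, hprob, hreg, hinv⟩ := hΓ
  haveI := hdisc
  haveI := hprob
  have hc1 : (0:ℝ) < c + 1 := by linarith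
  -- the induced representation on the complement of the fixed space has a spectral gap
  have hσRc : (sigmaRep π Γ).IsRc c := ⟨sigmaRep_isUB π Γ hc hub, sigmaRep_sot π Γ⟩
  have hσ : ¬ (sigmaRep π Γ).AlmostInvariantVectors := fun h =>
    sigmaRep_no_inv π Γ hc hub (hT _ hσRc h)
  rw [HilbRep.AlmostInvariantVectors] at hσ
  push_neg at hσ
  obtain ⟨Q₀, hQ₀c, ε₀, hε₀, hσgap⟩ := hσ
  -- Key step: Γ-fixed vectors that are almost invariant under any compact set of G
  have key : ∀ Q : Set G, IsCompact Q → ∀ ε : ℝ, 0 < ε →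
      ∃ κ : π.space, κ ∈ fixedK π Γ ∧ κ ≠ 0 ∧ ∀ g ∈ Q, ‖π.op g κ - κ‖ ≤ ε * ‖κ‖ := by
    intro Q hQ ε hε
    set ε' := min (ε₀ / 2) (ε * ε₀ / (2 * (ε₀ + c + 1))) with hε'def
    have hε'pos : 0 < ε' := lt_min (by linarith) (by positivity)
    have hε'le : ε' ≤ ε₀ / 2 := min_le_left _ _
    have hε'le2 : ε' ≤ ε * ε₀ / (2 * (ε₀ + c + 1)) := min_le_right _ _
    clear_value ε'
    have hQ' : IsCompact (Q ∪ ((Subtype.val '' Q₀) ∪ {1}) : Set G) :=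
      hQ.union ((hQ₀c.image continuous_subtype_val).union isCompact_singleton)
    obtain ⟨ξ, hξ⟩ := hAI _ hQ' ε' hε'pos
    have hξ0 : 0 < ‖ξ‖ := by
      have h1 := hξ 1 (Or.inr (Or.inr rfl))
      rw [HilbRep.op_one_apply, sub_self] at h1
      by_contra hcon
      push_neg at hcon
      have h0 : ‖ξ‖ = 0 := le_antisymm hcon (norm_nonneg _)
      rw [h0, mul_zero] at h1
      simpa using h1
    set ζ := Submodule.orthogonalProjectionOnto (fixedK π Γ)ᗮ ξ with hζdef
    set κ := (Submodule.orthogonalProjectionOnto (fixedK π Γ) ξ : π.space) with hκdef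
    have hdec : κ + (ζ : π.space) = ξ :=
      Submodule.starProjection_add_starProjection_orthogonal ξ
    obtain ⟨γ, hγQ₀, hγ⟩ := hσgap ζ
    have hγ' : ε₀ * ‖ζ‖ ≤ ‖opA π Γ γ ζ - ζ‖ := hγ
    clear hγ hσgap
    have hAγ : opA π Γ γ ζ - ζ
        = Submodule.orthogonalProjectionOnto (fixedK π Γ)ᗮ (π.op (↑γ) ξ - ξ) := by
      rw [hζdef, ← proj_op, map_sub]
    have hζsmall : ε₀ * ‖ζ‖ ≤ ε' * ‖ξ‖ := by
      have hb : ‖opA π Γ γ ζ - ζ‖ ≤ ‖π.op (↑γ) ξ - ξ‖ := by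
        rw [hAγ]
        exact le_trans ((Submodule.orthogonalProjectionOnto ((fixedK π Γ)ᗮ)).le_opNorm _)
          (mul_le_of_le_one_left (norm_nonneg _) (Submodule.orthogonalProjectionOnto_norm_le _))
      exact le_trans hγ' (le_trans hb
        (le_of_lt (hξ (↑γ) (Or.inr (Or.inl ⟨γ, hγQ₀, rfl⟩)))))
    have hκmem : κ ∈ fixedK π Γ := (Submodule.orthogonalProjectionOnto (fixedK π Γ) ξ).2
    clear_value ζ κ
    have hζξ : ‖(ζ : π.space)‖ ≤ ε' / ε₀ * ‖ξ‖ := by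
      have : ‖(ζ : π.space)‖ = ‖ζ‖ := rfl
      rw [this, div_mul_eq_mul_div, le_div_iff₀ hε₀]
      nlinarith
    have hζhalf : ‖(ζ : π.space)‖ ≤ ‖ξ‖ / 2 := by
      have h2 : ε' / ε₀ ≤ 1 / 2 := by
        rw [div_le_div_iff₀ hε₀ (by norm_num)]
        linarith
      nlinarith
    have hκeq : κ = ξ - (ζ : π.space) := by rw [← hdec]; abel
    have hκnorm : ‖ξ‖ / 2 ≤ ‖κ‖ := by
      have := norm_sub_norm_le ξ (ζ : π.space)
      rw [hκeq]
      have h3 : ‖ξ - (ζ:π.space)‖ ≥ ‖ξ‖ - ‖(ζ:π.space)‖ := norm_sub_norm_le _ _ |>.trans (le_refl _) |>.trans (le_refl _)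
      linarith [norm_sub_norm_le ξ (ζ : π.space)]
    have hκpos : 0 < ‖κ‖ := by linarith
    refine ⟨κ, hκmem, norm_pos_iff.1 hκpos, ?_⟩
    intro g hg
    have hgξ : ‖π.op g ξ - ξ‖ < ε' * ‖ξ‖ := hξ g (Or.inl hg)
    have hgζ : ‖π.op g (ζ : π.space)‖ ≤ c * ‖(ζ : π.space)‖ :=
      le_trans ((π.op g).le_opNorm _) (mul_le_mul_of_nonneg_right (hub g) (norm_nonneg _))
    have hstep : ‖π.op g κ - κ‖ ≤ ε' * ‖ξ‖ + (c + 1) * ‖(ζ : π.space)‖ := by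
      have heq2 : π.op g κ - κ = (π.op g ξ - ξ) - (π.op g (ζ : π.space) - (ζ : π.space)) := by
        rw [hκeq, map_sub]; abel
      rw [heq2]
      calc ‖(π.op g ξ - ξ) - (π.op g (ζ : π.space) - (ζ : π.space))‖
          ≤ ‖π.op g ξ - ξ‖ + ‖π.op g (ζ : π.space) - (ζ : π.space)‖ := norm_sub_le _ _
        _ ≤ ‖π.op g ξ - ξ‖ + (‖π.op g (ζ : π.space)‖ + ‖(ζ : π.space)‖) := by
            linarith [norm_sub_le (π.op g (ζ : π.space)) (ζ : π.space)]
        _ ≤ ε' * ‖ξ‖ + (c + 1) * ‖(ζ : π.space)‖ := by nlinarith [norm_nonneg (ζ : π.space)]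
    have harith : ε' * ‖ξ‖ + (c + 1) * ‖(ζ : π.space)‖ ≤ ε * ‖κ‖ := by
      have h4 : (c + 1) * ‖(ζ : π.space)‖ ≤ (c + 1) * (ε' / ε₀ * ‖ξ‖) := by nlinarith
      have h5 : ε' * ‖ξ‖ + (c + 1) * (ε' / ε₀ * ‖ξ‖) ≤ ε / 2 * ‖ξ‖ := by
        have h6 : ε' * (ε₀ + c + 1) / ε₀ ≤ ε / 2 := by
          rw [div_le_iff₀ hε₀]
          have h := hε'le2
          rw [le_div_iff₀ (by positivity : (0:ℝ) < 2 * (ε₀ + c + 1))] at h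
          nlinarith
        have h7 : ε' * ‖ξ‖ + (c + 1) * (ε' / ε₀ * ‖ξ‖) = ε' * (ε₀ + c + 1) / ε₀ * ‖ξ‖ := by
          field_simp; ring
        rw [h7]
        nlinarith
      have h8 : ε / 2 * ‖ξ‖ ≤ ε * ‖κ‖ := by nlinarith
      linarith
    exact le_trans hstep harith
  -- choose a compact set in the quotient of almost full measure
  set δ : ℝ := 1 / (4 * (c + 1)) with hδdef
  have hδ0 : 0 < δ := by positivity
  have h1lt : (1 : ℝ≥0∞) - ENNReal.ofReal δ < μ Set.univ := by
    rw [measure_univ]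
    exact ENNReal.sub_lt_self ENNReal.one_ne_top one_ne_zero (ENNReal.ofReal_pos.2 hδ0).ne'
  obtain ⟨C, _, hCc, hCμ⟩ := hreg.innerRegular isOpen_univ _ h1lt
  obtain ⟨Q, hQc, hCQ⟩ := exists_compact_lift Γ hCc
  obtain ⟨κ, hκK, hκ0, hκinv⟩ := key Q hQc (1/4) (by norm_num)
  have hκpos : 0 < ‖κ‖ := norm_pos_iff.2 hκ0
  -- the averaged vector
  letI : MeasurableSpace π.space := borel π.space
  haveI : BorelSpace π.space := ⟨rfl⟩
  set Φ : G ⧸ Γ → π.space := Quotient.lift (fun g => π.op g κ) (by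
    intro a b hab
    have hab' := QuotientGroup.leftRel_apply.1 hab
    have hbeq : b = a * ((⟨a⁻¹ * b, hab'⟩ : Γ) : G) := by simp
    show π.op a κ = π.op b κ
    rw [hbeq, HilbRep.op_mul_apply, hκK ⟨a⁻¹ * b, hab'⟩]) with hΦdef
  have hΦmk : ∀ g : G, Φ (QuotientGroup.mk g) = π.op g κ := fun g => rfl
  have hΦcont : Continuous Φ := by
    rw [hΦdef]
    exact Continuous.quotient_lift (hsot κ) _
  have hΦmeas : Measurable Φ :=
    QuotientGroup.measurable_from_quotient.2 ((hsot κ).measurable)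
  have hΦsep : TopologicalSpace.IsSeparable (Set.range Φ) := by
    have hr : Set.range Φ = Set.range (fun g : G => π.op g κ) := by
      rw [← QuotientGroup.mk_surjective.range_comp (g := Φ)]
      rfl
    rw [hr]
    exact TopologicalSpace.isSeparable_range (hsot κ)
  have hΦsm : AEStronglyMeasurable Φ μ :=
    (stronglyMeasurable_iff_measurable_separable.2 ⟨hΦmeas, hΦsep⟩).aestronglyMeasurable
  have hΦbdd : ∀ x, ‖Φ x‖ ≤ c * ‖κ‖ := by
    refine Quotient.ind ?_
    intro g
    rw [show Quotient.mk _ g = QuotientGroup.mk g from rfl, hΦmk]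
    exact le_trans ((π.op g).le_opNorm _) (mul_le_mul_of_nonneg_right (hub g) (norm_nonneg _))
  have hΦint : Integrable Φ μ :=
    Integrable.mono' (integrable_const (c * ‖κ‖)) hΦsm (Filter.Eventually.of_forall hΦbdd)
  set η := ∫ x, Φ x ∂μ with hηdef
  -- invariance of the averaged vector
  have hηinv : ∀ s : G, π.op s η = η := by
    intro s
    have hmeas_smul : Measurable (fun x : G ⧸ Γ => s • x) := by
      refine QuotientGroup.measurable_from_quotient.2 ?_
      have hcomp : ((fun x : G ⧸ Γ => s • x) ∘ (QuotientGroup.mk : G → G ⧸ Γ))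
          = fun g : G => (QuotientGroup.mk (s * g) : G ⧸ Γ) :=
        funext fun g => MulAction.Quotient.smul_mk Γ s g
      rw [hcomp]
      exact QuotientGroup.measurable_coe.comp (measurable_const_mul s)
    have hΦsm' : AEStronglyMeasurable Φ (Measure.map (fun x : G ⧸ Γ => s • x) μ) := by
      rw [hinv s]; exact hΦsm
    have h1 : π.op s η = ∫ x, π.op s (Φ x) ∂μ :=
      (ContinuousLinearMap.integral_comp_comm _ hΦint).symm
    have h2 : (fun x => π.op s (Φ x)) = fun x => Φ (s • x) := by
      funext x
      induction x using Quotient.ind with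
      | _ g =>
        rw [show Quotient.mk _ g = QuotientGroup.mk g from rfl, hΦmk,
          MulAction.Quotient.smul_mk Γ s g, hΦmk, ← HilbRep.op_mul_apply, smul_eq_mul]
    rw [h1, h2]
    calc (∫ x, Φ (s • x) ∂μ)
        = ∫ y, Φ y ∂(Measure.map (fun x : G ⧸ Γ => s • x) μ) :=
          (integral_map hmeas_smul.aemeasurable hΦsm').symm
      _ = η := by rw [hinv s]
  -- the averaged vector is nonzero
  set E := {x : G ⧸ Γ | ‖Φ x - κ‖ ≤ 1/4 * ‖κ‖} with hEdef
  have hEclosed : IsClosed E :=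
    isClosed_le (Continuous.norm (hΦcont.sub continuous_const)) continuous_const
  have hEmeas : MeasurableSet E :=
    measurableSet_quotient.2 ((hEclosed.preimage continuous_quot_mk).measurableSet)
  have hCE : C ⊆ E := by
    intro x hx
    obtain ⟨g, hgQ, rfl⟩ := hCQ hx
    show ‖Φ (QuotientGroup.mk g) - κ‖ ≤ 1/4 * ‖κ‖
    rw [hΦmk]
    exact hκinv g hgQ
  have hμEc : μ Eᶜ ≤ ENNReal.ofReal δ := by
    have hcompl : μ Eᶜ = 1 - μ E := prob_compl_eq_one_sub hEmeas
    rw [hcompl]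
    refine tsub_le_iff_left.2 ?_
    have hCEμ : (1 : ℝ≥0∞) - ENNReal.ofReal δ ≤ μ E := le_trans hCμ.le (measure_mono hCE)
    have hδ1 : ENNReal.ofReal δ ≤ 1 :=
      ENNReal.ofReal_le_one.2 (by rw [hδdef, div_le_one (by positivity)]; nlinarith)
    calc (1 : ℝ≥0∞) = (1 - ENNReal.ofReal δ) + ENNReal.ofReal δ :=
          (tsub_add_cancel_of_le hδ1).symm
      _ ≤ μ E + ENNReal.ofReal δ := add_le_add_left hCEμ _
  have hμEcr : (μ Eᶜ).toReal ≤ δ :=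
    ENNReal.toReal_le_of_le_ofReal hδ0.le hμEc
  have hμE1 : (μ E).toReal ≤ 1 := by
    simpa using ENNReal.toReal_mono ENNReal.one_ne_top prob_le_one
  have hκint : Integrable (fun _ : G ⧸ Γ => κ) μ := integrable_const κ
  have hfint : Integrable (fun x => Φ x - κ) μ := hΦint.sub hκint
  have hbig : ∀ x, ‖Φ x - κ‖ ≤ (c + 1) * ‖κ‖ := by
    intro x
    calc ‖Φ x - κ‖ ≤ ‖Φ x‖ + ‖κ‖ := norm_sub_le _ _
      _ ≤ c * ‖κ‖ + ‖κ‖ := by linarith [hΦbdd x]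
      _ = (c + 1) * ‖κ‖ := by ring
  have hηκ : ‖η - κ‖ ≤ (1/4 * ‖κ‖) * (μ E).toReal + ((c + 1) * ‖κ‖) * (μ Eᶜ).toReal := by
    have hsub : η - κ = ∫ x, (Φ x - κ) ∂μ := by
      rw [integral_sub hΦint hκint, integral_const, probReal_univ, one_smul]
    rw [hsub]
    have hIE : (∫ x in E, ‖Φ x - κ‖ ∂μ) ≤ (1/4 * ‖κ‖) * (μ E).toReal := by
      have hm := setIntegral_mono_on hfint.norm.integrableOn
        (integrableOn_const (measure_ne_top μ E)) hEmeas
        (fun x hx => hx)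
      rw [setIntegral_const, smul_eq_mul, measureReal_def] at hm
      linarith
    have hIEc : (∫ x in Eᶜ, ‖Φ x - κ‖ ∂μ) ≤ ((c + 1) * ‖κ‖) * (μ Eᶜ).toReal := by
      have hm := setIntegral_mono_on hfint.norm.integrableOn
        (integrableOn_const (measure_ne_top μ Eᶜ)) hEmeas.compl
        (fun x _ => hbig x)
      rw [setIntegral_const, smul_eq_mul, measureReal_def] at hm
      linarith
    calc ‖∫ x, (Φ x - κ) ∂μ‖ ≤ ∫ x, ‖Φ x - κ‖ ∂μ := norm_integral_le_integral_norm _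
      _ = (∫ x in E, ‖Φ x - κ‖ ∂μ) + ∫ x in Eᶜ, ‖Φ x - κ‖ ∂μ :=
          (integral_add_compl hEmeas hfint.norm).symm
      _ ≤ (1/4 * ‖κ‖) * (μ E).toReal + ((c + 1) * ‖κ‖) * (μ Eᶜ).toReal :=
          add_le_add hIE hIEc
  have hfinal : ‖η - κ‖ ≤ 1/2 * ‖κ‖ := by
    have hδval : (c + 1) * δ = 1/4 := by
      rw [hδdef]
      field_simp
    have h1 : (1/4 * ‖κ‖) * (μ E).toReal ≤ 1/4 * ‖κ‖ := by
      nlinarith [ENNReal.toReal_nonneg (a := μ E)]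
    have h2 : ((c + 1) * ‖κ‖) * (μ Eᶜ).toReal ≤ (c + 1) * ‖κ‖ * δ := by
      have : (0:ℝ) ≤ (c+1) * ‖κ‖ := by positivity
      nlinarith [ENNReal.toReal_nonneg (a := μ Eᶜ)]
    have h3 : (c + 1) * ‖κ‖ * δ = 1/4 * ‖κ‖ := by nlinarith [hδval]
    nlinarith [hηκ]
  have hηne : η ≠ 0 := by
    intro h0
    rw [h0] at hfinal
    rw [zero_sub, norm_neg] at hfinal
    nlinarith
  exact ⟨η, hηne, hηinv⟩
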